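/- For every z ∈ ℝⁿ and every t > 0 there exists a centered ellipsoid E = T(B₂ⁿ), with T an invertible linear map of ℝⁿ, such that z + t·B₂ⁿ ⊆ E ⊆ conv((2z + 2√2·t·B₂ⁿ) ∪ (−2z + 2√2·t·B₂ⁿ)). -/

import Mathlib

open MeasureTheory Metric
open scoped NNReal ENNReal Pointwise

noncomputable section

variable {E : Type*} [NormedAddCommGroup E] [InnerProductSpace ℝ E]

/-- Radial function of a set. -/
def radFn (K : Set E) (x : E) : ℝ := sSup {a : ℝ | 0 ≤ a ∧ a • x ∈ K}

/-- A star body: compact, origin interior, continuous radial function off 0. -/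
def IsStarBody (K : Set E) : Prop :=
  IsCompact K ∧ 0 ∈ interior K ∧ ContinuousOn (radFn K) {x : E | x ≠ 0}

/-- Symmetric convex body. -/
def IsSymmConvexBody (K : Set E) : Prop :=
  IsCompact K ∧ Convex ℝ K ∧ (interior K).Nonempty ∧ K = -K

/-- `D` is the k-intersection body of `K`. -/
def IsKIntBody (n k : ℕ) (D K : Set (EuclideanSpace ℝ (Fin n))) : Prop :=
  ∀ F : Submodule ℝ (EuclideanSpace ℝ (Fin n)), Module.finrank ℝ F = k →
    μH[(k : ℝ)] (D ∩ (F : Set (EuclideanSpace ℝ (Fin n)))) =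
      μH[((n - k : ℕ) : ℝ)] (K ∩ ((Fᗮ : Submodule ℝ (EuclideanSpace ℝ (Fin n))) : Set (EuclideanSpace ℝ (Fin n))))

/-- Geometric distance between two bodies. -/
def geomDist (K₁ K₂ : Set E) : ℝ :=
  sInf {r : ℝ | 0 < r ∧ ∃ a : ℝ, 0 < a ∧ K₁ ⊆ a • K₂ ∧ a • K₂ ⊆ (r * a) • K₁}

/-- Banach–Mazur distance. -/
def banachMazur (K₁ K₂ : Set E) : ℝ :=
  sInf {d : ℝ | ∃ T : E ≃ₗ[ℝ] E, d = geomDist K₁ (T '' K₂)}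


open scoped RealInnerProductSpace

section AuxEllipsoid
variable {F : Type*} [NormedAddCommGroup F] [InnerProductSpace ℝ F]

set_option maxHeartbeats 4000000

def rk1 (z : F) (c : ℝ) : F →ₗ[ℝ] F :=
  LinearMap.smulRight (c • (innerSL ℝ z).toLinearMap) z

@[simp] lemma rk1_apply (z : F) (c : ℝ) (x : F) : rk1 z c x = (c * ⟪z, x⟫) • z := by
  simp [rk1, smul_smul]

lemma mem_smul_cball {r : ℝ} (hr : 0 < r) {p : F} (hp : ‖p‖ ≤ r) :
    p ∈ r • closedBall (0 : F) 1 := by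
  refine Set.mem_smul_set.2 ⟨r⁻¹ • p, ?_, ?_⟩
  · rw [mem_closedBall_zero_iff, norm_smul, norm_inv, Real.norm_eq_abs, abs_of_pos hr,
      inv_mul_le_iff₀ hr, mul_one]
    exact hp
  · rw [smul_smul, mul_inv_cancel₀ hr.ne', one_smul]

lemma mem_conv_aux (z p : F) {r : ℝ} (hr : 0 < r) (hp : ‖p‖ ≤ r) {m : ℝ}
    (hm1 : -1 ≤ m) (hm2 : m ≤ 1) :
    (2*m) • z + p ∈ convexHull ℝ
      (({(2 : ℝ) • z} + r • closedBall (0 : F) 1) ∪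
       ({-((2 : ℝ) • z)} + r • closedBall (0 : F) 1)) := by
  set S := ({(2 : ℝ) • z} + r • closedBall (0 : F) 1) ∪
       ({-((2 : ℝ) • z)} + r • closedBall (0 : F) 1) with hS
  have h1 : (2 : ℝ) • z + p ∈ S :=
    Set.mem_union_left _ (Set.add_mem_add rfl (mem_smul_cball hr hp))
  have h2 : -((2 : ℝ) • z) + p ∈ S :=
    Set.mem_union_right _ (Set.add_mem_add rfl (mem_smul_cball hr hp))
  have key : (2*m) • z + p
      = ((1+m)/2) • ((2 : ℝ) • z + p) + ((1-m)/2) • (-((2 : ℝ) • z) + p) := by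
    module
  rw [key]
  exact (convex_convexHull ℝ S) (subset_convexHull ℝ S h1) (subset_convexHull ℝ S h2)
    (by linarith) (by linarith) (by ring)

lemma main_aux (z : F) (t : ℝ) (ht : 0 < t) :
    ∃ T : F ≃ₗ[ℝ] F,
      ({z} + t • closedBall (0 : F) 1) ⊆ T '' closedBall (0 : F) 1 ∧
      T '' closedBall (0 : F) 1 ⊆
        convexHull ℝ
          (({(2 : ℝ) • z} + (2 * Real.sqrt 2 * t) • closedBall (0 : F) 1) ∪
           ({-((2 : ℝ) • z)} + (2 * Real.sqrt 2 * t) • closedBall (0 : F) 1)) := by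
  have hr : (0:ℝ) < 2 * Real.sqrt 2 * t := by positivity
  have hr2 : (2 * Real.sqrt 2 * t)^2 = 8*t^2 := by
    rw [mul_pow, mul_pow, Real.sq_sqrt (by norm_num : (0:ℝ) ≤ 2)]; ring
  obtain ⟨s, hs⟩ : ∃ s : ℝ, ‖z‖ = s := ⟨_, rfl⟩
  have hs0 : 0 ≤ s := hs ▸ norm_nonneg z
  obtain ⟨a, ha, ha2⟩ : ∃ a : ℝ, 0 < a ∧ a^2 = 2*(s^2+t^2) :=
    ⟨Real.sqrt (2*(s^2+t^2)), Real.sqrt_pos.2 (by positivity),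
      Real.sq_sqrt (by positivity)⟩
  obtain ⟨b, hb, hb2, hbr⟩ : ∃ b : ℝ, 0 < b ∧ b^2 = 2*t^2 ∧ b ≤ 2 * Real.sqrt 2 * t := by
    refine ⟨Real.sqrt 2 * t, by positivity, ?_, ?_⟩
    · rw [mul_pow, Real.sq_sqrt (by norm_num : (0:ℝ) ≤ 2)]
    · nlinarith [Real.sqrt_nonneg 2, mul_nonneg (Real.sqrt_nonneg 2) ht.le]
  have hab : a^2 - b^2 = 2*s^2 := by rw [ha2, hb2]; ring
  obtain ⟨c, hcDef⟩ : ∃ c : ℝ, c = (a - b)/s^2 := ⟨_, rfl⟩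
  obtain ⟨c', hc'Def⟩ : ∃ c' : ℝ, c' = (b - a)/(a*b*s^2) := ⟨_, rfl⟩
  obtain ⟨f, hfDef⟩ : ∃ f : F →ₗ[ℝ] F, f = b • LinearMap.id + rk1 z c := ⟨_, rfl⟩
  obtain ⟨g, hgDef⟩ : ∃ g : F →ₗ[ℝ] F, g = b⁻¹ • LinearMap.id + rk1 z c' := ⟨_, rfl⟩
  have hzz : ⟪z, z⟫ = s^2 := by rw [real_inner_self_eq_norm_sq, hs]
  have hgf : g.comp f = LinearMap.id := by
    ext x
    simp only [hfDef, hgDef, LinearMap.comp_apply, LinearMap.add_apply, LinearMap.smul_apply,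
      LinearMap.id_apply, rk1_apply, inner_add_right, inner_smul_right, hzz]
    have h1 : b⁻¹ • (b • x) = x := by rw [smul_smul, inv_mul_cancel₀ hb.ne', one_smul]
    rw [smul_add, h1, smul_smul, add_assoc, ← add_smul]
    convert add_zero x
    by_cases hz : z = 0
    · simp [hz]
    · have hs' : s ≠ 0 := by rw [← hs]; simpa using hz
      convert zero_smul ℝ z
      rw [hcDef, hc'Def]
      field_simp
      ring
  have hfg : f.comp g = LinearMap.id := by
    ext x
    simp only [hfDef, hgDef, LinearMap.comp_apply, LinearMap.add_apply, LinearMap.smul_apply,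
      LinearMap.id_apply, rk1_apply, inner_add_right, inner_smul_right, hzz]
    have h1 : b • (b⁻¹ • x) = x := by rw [smul_smul, mul_inv_cancel₀ hb.ne', one_smul]
    rw [smul_add, h1, smul_smul, add_assoc, ← add_smul]
    convert add_zero x
    by_cases hz : z = 0
    · simp [hz]
    · have hs' : s ≠ 0 := by rw [← hs]; simpa using hz
      convert zero_smul ℝ z
      rw [hcDef, hc'Def]
      field_simp
      ring
  refine ⟨LinearEquiv.ofLinear f g hfg hgf, ?_, ?_⟩
  · -- inclusion 1
    rintro y hy
    rw [Set.singleton_add] at hy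
    obtain ⟨q, hq, rfl⟩ := hy
    obtain ⟨v, hv, rfl⟩ := Set.mem_smul_set.1 hq
    rw [mem_closedBall_zero_iff] at hv
    refine ⟨g (z + t • v), mem_closedBall_zero_iff.2 ?_, by
      simp only [LinearEquiv.ofLinear_apply]
      rw [← LinearMap.comp_apply, hfg, LinearMap.id_apply]⟩
    by_cases hz : z = 0
    · subst hz
      have hgy : g ((0:F) + t • v) = b⁻¹ • (t • v) := by
        simp [hgDef, smul_smul, mul_comm]
      rw [hgy, norm_smul, norm_smul, norm_inv, Real.norm_eq_abs, Real.norm_eq_abs,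
        abs_of_pos hb, abs_of_pos ht, inv_mul_le_iff₀ hb, mul_one]
      nlinarith [hv, norm_nonneg v, hb2, hb, ht, mul_nonneg ht.le (sub_nonneg.2 hv)]
    · have hs' : (0:ℝ) < s := by rw [← hs]; exact norm_pos_iff.2 hz
      have hP : ⟪z, z + t • v⟫ = s^2 + t*⟪z,v⟫ := by
        rw [inner_add_right, real_inner_smul_right, hzz]
      have hy2 : ‖z + t • v‖^2 = s^2 + 2*(t*⟪z,v⟫) + t^2*‖v‖^2 := by
        rw [norm_add_sq_real, real_inner_smul_right, norm_smul, Real.norm_eq_abs,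
          mul_pow, sq_abs, hs]
      have hgy : g (z + t • v) = b⁻¹ • (z + t • v) + (c' * ⟪z, z + t • v⟫) • z := by
        simp [hgDef]
      have hn1 : ‖b⁻¹ • (z + t • v)‖^2 = (b⁻¹)^2 * ‖z + t • v‖^2 := by
        rw [norm_smul, Real.norm_eq_abs, mul_pow, sq_abs]
      have hn2 : ‖(c' * ⟪z, z + t • v⟫) • z‖^2 = (c' * ⟪z, z + t • v⟫)^2 * s^2 := by
        rw [norm_smul, Real.norm_eq_abs, mul_pow, sq_abs, hs]
      have hn3 : ⟪b⁻¹ • (z + t • v), (c' * ⟪z, z + t • v⟫) • z⟫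
          = b⁻¹ * ((c' * ⟪z, z + t • v⟫) * ⟪z, z + t • v⟫) := by
        rw [real_inner_smul_left, real_inner_smul_right, ← real_inner_comm (z + t • v) z]
      have hgy2 : (a^2*b^2) * ‖g (z + t • v)‖^2
          = a^2*‖z + t • v‖^2 - 2*(⟪z, z + t • v⟫)^2 := by
        rw [hgy, norm_add_sq_real, hn1, hn2, hn3, hc'Def]
        field_simp
        linear_combination (-(⟪z, z + t • v⟫:ℝ)^2) * hab
      have hv2 : ‖v‖^2 ≤ 1 := by nlinarith [norm_nonneg v]
      have hst : (0:ℝ) ≤ s^2+t^2 := by positivity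
      have h8 : a^2*‖z + t • v‖^2 - 2*(⟪z, z + t • v⟫)^2 ≤ a^2*b^2 := by
        rw [hP, hy2, ha2, hb2]
        linarith [mul_nonneg (mul_nonneg (sq_nonneg t) hst) (sub_nonneg.2 hv2),
          mul_nonneg (sq_nonneg t) (sq_nonneg (⟪z,v⟫ - t))]
      have hsq : ‖g (z + t • v)‖^2 ≤ 1 := by
        nlinarith [hgy2, h8, mul_pos (pow_pos ha 2) (pow_pos hb 2)]
      nlinarith [norm_nonneg (g (z + t • v))]
  · -- inclusion 2
    rintro x ⟨u, hu, rfl⟩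
    rw [mem_closedBall_zero_iff] at hu
    simp only [LinearEquiv.ofLinear_apply]
    by_cases hz : z = 0
    · subst hz
      have hfu : f u = (2*(0:ℝ)) • (0:F) + b • u := by
        simp [hfDef]
      rw [hfu]
      refine mem_conv_aux 0 (b • u) hr ?_ (by norm_num) (by norm_num)
      rw [norm_smul, Real.norm_eq_abs, abs_of_pos hb]
      nlinarith [hu, norm_nonneg u, hb, hbr, hr]
    · have hs' : (0:ℝ) < s := by rw [← hs]; exact norm_pos_iff.2 hz
      have hbc : b + c*s^2 = a := by rw [hcDef]; field_simp; ring
      have hcc : 2*b*c + c^2*s^2 = 2 := by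
        rw [hcDef]; field_simp; linear_combination hab
      have hfu : f u = b • u + (c*⟪z,u⟫) • z := by simp [hfDef]
      have hfuz : ⟪f u, z⟫ = a*⟪z,u⟫ := by
        rw [hfu, inner_add_left, real_inner_smul_left, real_inner_smul_left,
          ← real_inner_comm u z, hzz]
        linear_combination (⟪z,u⟫:ℝ) * hbc
      have hfu2 : ‖f u‖^2 = b^2*‖u‖^2 + 2*⟪z,u⟫^2 := by
        rw [hfu, norm_add_sq_real, real_inner_smul_left, real_inner_smul_right,
          ← real_inner_comm u z, norm_smul, norm_smul, Real.norm_eq_abs,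
          Real.norm_eq_abs, mul_pow, mul_pow, sq_abs, sq_abs, hs]
        linear_combination (⟪z,u⟫:ℝ)^2 * hcc
      have hCS : ⟪z,u⟫^2 ≤ s^2*‖u‖^2 := by
        have h := real_inner_mul_inner_self_le z u
        rw [hzz, real_inner_self_eq_norm_sq] at h
        nlinarith [h]
      obtain ⟨m, hmDef⟩ : ∃ m : ℝ, m = max (-1) (min 1 (a*⟪z,u⟫/(2*s^2))) := ⟨_, rfl⟩
      have hm1 : -1 ≤ m := hmDef ▸ le_max_left _ _
      have hm2 : m ≤ 1 := hmDef ▸ max_le (by norm_num) (min_le_left _ _)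
      obtain ⟨p, hpDef⟩ : ∃ p : F, p = f u - (2*m) • z := ⟨_, rfl⟩
      have hp2 : ‖p‖^2 = b^2*‖u‖^2 + 2*⟪z,u⟫^2 - 4*m*(a*⟪z,u⟫) + 4*m^2*s^2 := by
        rw [hpDef, norm_sub_sq_real, hfu2, real_inner_smul_right, hfuz, norm_smul,
          Real.norm_eq_abs, mul_pow, sq_abs, hs]
        ring
      have husq : ‖u‖^2 ≤ 1 := by nlinarith [norm_nonneg u]
      have hp8 : ‖p‖^2 ≤ 8*t^2 := by
        rcases le_or_gt (a*⟪z,u⟫/(2*s^2)) (-1) with hcase | hcase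
        · have hm : m = -1 := by
            rw [hmDef, min_eq_right (by linarith), max_eq_left hcase]
          have haP : a*⟪z,u⟫ ≤ -(2*s^2) := by
            rw [div_le_iff₀ (by positivity : (0:ℝ) < 2*s^2)] at hcase; linarith
          rw [hp2, hm, hb2]
          linarith [hCS, haP, mul_nonneg (sq_nonneg t) (sub_nonneg.2 husq),
            mul_nonneg (sq_nonneg s) (sub_nonneg.2 husq), sq_nonneg s, sq_nonneg t]
        · rcases le_or_gt 1 (a*⟪z,u⟫/(2*s^2)) with hcase2 | hcase2
          · have hm : m = 1 := by
              rw [hmDef, min_eq_left hcase2, max_eq_right (by norm_num)]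
            have haP : 2*s^2 ≤ a*⟪z,u⟫ := by
              rw [le_div_iff₀ (by positivity : (0:ℝ) < 2*s^2)] at hcase2; linarith
            rw [hp2, hm, hb2]
            linarith [hCS, haP, mul_nonneg (sq_nonneg t) (sub_nonneg.2 husq),
              mul_nonneg (sq_nonneg s) (sub_nonneg.2 husq), sq_nonneg s, sq_nonneg t]
          · have hm : m = a*⟪z,u⟫/(2*s^2) := by
              rw [hmDef, min_eq_right hcase2.le, max_eq_right hcase.le]
            rw [hp2, hm, hb2]
            have hs2 : (0:ℝ) < s^2 := by positivity
            have hkey : (2*t^2*‖u‖^2 + 2*⟪z,u⟫^2 - 4*(a*⟪z,u⟫/(2*s^2))*(a*⟪z,u⟫)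
                + 4*(a*⟪z,u⟫/(2*s^2))^2*s^2) * s^2
                = 2*t^2*‖u‖^2*s^2 - 2*t^2*⟪z,u⟫^2 := by
              field_simp
              linear_combination (-4*(⟪z,u⟫:ℝ)^2) * ha2
            have hgoal : (2*t^2*‖u‖^2*s^2 - 2*t^2*⟪z,u⟫^2)/s^2 ≤ 8*t^2 := by
              rw [div_le_iff₀ hs2]
              linarith [mul_nonneg (mul_nonneg (sq_nonneg t) (sq_nonneg s))
                  (sub_nonneg.2 husq), sq_nonneg (t*⟪z,u⟫),
                mul_nonneg (sq_nonneg t) (sq_nonneg s)]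
            refine le_trans (le_of_eq ?_) hgoal
            rw [eq_div_iff hs2.ne']
            linear_combination hkey
      have hpnorm : ‖p‖ ≤ 2 * Real.sqrt 2 * t := by
        nlinarith [hp8, hr2, norm_nonneg p, hr]
      have hxeq : f u = (2*m) • z + p := by rw [hpDef]; abel
      rw [hxeq]
      exact mem_conv_aux z p hr hpnorm hm1 hm2
end AuxEllipsoid

/-- every ball `z + tB₂ⁿ` is contained in a centered ellipsoid contained in
`conv((2z + 2√2 t B₂ⁿ) ∪ (−2z + 2√2 t B₂ⁿ))`. -/
theorem exists_centered_ellipsoid_between (n : ℕ) (z : EuclideanSpace ℝ (Fin n)) (t : ℝ)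
    (ht : 0 < t) :
    ∃ T : EuclideanSpace ℝ (Fin n) ≃ₗ[ℝ] EuclideanSpace ℝ (Fin n),
      ({z} + t • Metric.closedBall (0 : EuclideanSpace ℝ (Fin n)) 1) ⊆
        T '' Metric.closedBall (0 : EuclideanSpace ℝ (Fin n)) 1 ∧
      T '' Metric.closedBall (0 : EuclideanSpace ℝ (Fin n)) 1 ⊆
        convexHull ℝ
          (({(2 : ℝ) • z} + (2 * Real.sqrt 2 * t) • Metric.closedBall (0 : EuclideanSpace ℝ (Fin n)) 1) ∪
           ({-((2 : ℝ) • z)} + (2 * Real.sqrt 2 * t) • Metric.closedBall (0 : EuclideanSpace ℝ (Fin n)) 1)) :=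
  main_aux z t ht

end
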